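/- arXiv:1509.04918 — 5 statements merged into one kernel-verified Lean document; each statement's English description precedes it below -/
import Mathlib

section
/- For positive random variables Λ and M on a common probability space, the total variation distance between the mixed Poisson distributions MixPo(Λ) and MixPo(M) satisfies d_TV(MixPo(Λ), MixPo(M)) ≤ E[min(|√Λ − √M|, |Λ − M|)]. -/
open MeasureTheory Real

noncomputable def pois (a : ℝ) (k : ℕ) : ℝ := Real.exp (-a) * a ^ k / (Nat.factorial k : ℝ)

lemma tsum_pow_div_factorial (x : ℝ) : ∑' n : ℕ, x ^ n / (Nat.factorial n : ℝ) = Real.exp x := by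
  rw [Real.exp_eq_exp_ℝ, NormedSpace.exp_eq_tsum_div]

lemma pois_nonneg {a : ℝ} (ha : 0 ≤ a) (k : ℕ) : 0 ≤ pois a k := by
  unfold pois; positivity

lemma hasSum_pois {a : ℝ} : HasSum (pois a) 1 := by
  have h : HasSum (fun k : ℕ => a ^ k / (Nat.factorial k : ℝ)) (Real.exp a) := by
    have := (Real.summable_pow_div_factorial a).hasSum
    rwa [tsum_pow_div_factorial] at this
  have h2 := h.mul_left (Real.exp (-a))
  have : Real.exp (-a) * Real.exp a = 1 := by
    rw [← Real.exp_add]; simp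
  rw [this] at h2
  convert h2 using 2 with k
  case e'_5 => simp [pois, mul_div_assoc]
  rfl

lemma summable_pois (a : ℝ) : Summable (pois a) := hasSum_pois.summable

lemma tsum_pois (a : ℝ) : ∑' k, pois a k = 1 := hasSum_pois.tsum_eq

lemma pois_le_one {a : ℝ} (ha : 0 ≤ a) (k : ℕ) : pois a k ≤ 1 := by
  rw [← tsum_pois a]
  exact Summable.le_tsum (summable_pois a) k (fun j _ => pois_nonneg ha j)
lemma sqrt_pois_mul {a b : ℝ} (ha : 0 ≤ a) (hb : 0 ≤ b) (k : ℕ) :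
    Real.sqrt (pois a k * pois b k)
      = Real.exp (-((a + b) / 2)) * Real.sqrt (a * b) ^ k / (Nat.factorial k : ℝ) := by
  have h2 : pois a k * pois b k
      = (Real.exp (-((a + b) / 2)) * Real.sqrt (a * b) ^ k / (Nat.factorial k : ℝ)) ^ 2 := by
    have hab : Real.sqrt (a * b) ^ 2 = a * b := Real.sq_sqrt (mul_nonneg ha hb)
    have he : Real.exp (-((a + b) / 2)) ^ 2 = Real.exp (-a) * Real.exp (-b) := by
      rw [sq, ← Real.exp_add, ← Real.exp_add]; ring_nf
    have hpow : (Real.sqrt (a * b) ^ k) ^ 2 = a ^ k * b ^ k := by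
      rw [← pow_mul, mul_comm k 2, pow_mul, hab, mul_pow]
    unfold pois
    rw [div_pow, mul_pow, he, hpow]
    ring
  rw [h2, Real.sqrt_sq (by positivity)]

lemma hasSum_sqrt_pois_mul {a b : ℝ} (ha : 0 ≤ a) (hb : 0 ≤ b) :
    HasSum (fun k => Real.sqrt (pois a k * pois b k))
      (Real.exp (-(Real.sqrt a - Real.sqrt b) ^ 2 / 2)) := by
  have h : HasSum (fun k : ℕ => Real.sqrt (a*b) ^ k / (Nat.factorial k : ℝ))
      (Real.exp (Real.sqrt (a*b))) := by
    have he : Real.exp (Real.sqrt (a*b)) = ∑' n : ℕ, Real.sqrt (a*b) ^ n / (Nat.factorial n : ℝ) := by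
      rw [Real.exp_eq_exp_ℝ, NormedSpace.exp_eq_tsum_div]
    rw [he]
    exact (Real.summable_pow_div_factorial (Real.sqrt (a*b))).hasSum
  have h2 := h.mul_left (Real.exp (-((a + b) / 2)))
  have hval : Real.exp (-((a + b) / 2)) * Real.exp (Real.sqrt (a*b))
      = Real.exp (-(Real.sqrt a - Real.sqrt b) ^ 2 / 2) := by
    rw [← Real.exp_add]
    congr 1
    have h1 : Real.sqrt a ^ 2 = a := Real.sq_sqrt ha
    have h2 : Real.sqrt b ^ 2 = b := Real.sq_sqrt hb
    have h3 : Real.sqrt (a*b) = Real.sqrt a * Real.sqrt b := Real.sqrt_mul ha b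
    rw [h3]; nlinarith [h1, h2]
  rw [hval] at h2
  refine h2.congr_fun fun k => ?_
  rw [sqrt_pois_mul ha hb k, mul_div_assoc]
lemma tsum_abs_sub_pois_le_sqrt {a b : ℝ} (ha : 0 ≤ a) (hb : 0 ≤ b) :
    ∑' k, |pois a k - pois b k| ≤ 2 * |Real.sqrt a - Real.sqrt b| := by
  rcases eq_or_ne a b with rfl | hab
  · simp
  set r : ℝ := |Real.sqrt a - Real.sqrt b| with hr
  have hrpos : 0 < r := by
    rw [hr, abs_pos, sub_ne_zero]
    intro h
    exact hab (by rw [← Real.sq_sqrt ha, ← Real.sq_sqrt hb, h])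
  set t : ℝ := 2 / r with ht
  have htpos : 0 < t := by positivity
  set S : ℝ := Real.exp (-(Real.sqrt a - Real.sqrt b) ^ 2 / 2) with hS
  have hSsum := hasSum_sqrt_pois_mul ha hb
  have hP : HasSum (pois a) 1 := hasSum_pois
  have hQ : HasSum (pois b) 1 := hasSum_pois
  -- pointwise identities
  have hptm : ∀ k, (Real.sqrt (pois a k) - Real.sqrt (pois b k)) ^ 2
      = pois a k + pois b k - 2 * Real.sqrt (pois a k * pois b k) := by
    intro k
    rw [Real.sqrt_mul (pois_nonneg ha k)]
    have h1 := Real.sq_sqrt (pois_nonneg ha k)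
    have h2 := Real.sq_sqrt (pois_nonneg hb k)
    nlinarith [h1, h2]
  have hptp : ∀ k, (Real.sqrt (pois a k) + Real.sqrt (pois b k)) ^ 2
      = pois a k + pois b k + 2 * Real.sqrt (pois a k * pois b k) := by
    intro k
    rw [Real.sqrt_mul (pois_nonneg ha k)]
    have h1 := Real.sq_sqrt (pois_nonneg ha k)
    have h2 := Real.sq_sqrt (pois_nonneg hb k)
    nlinarith [h1, h2]
  have hMinus : HasSum (fun k => (Real.sqrt (pois a k) - Real.sqrt (pois b k)) ^ 2)
      (2 - 2 * S) := by
    have := (hP.add hQ).sub (hSsum.mul_left 2)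
    norm_num at this
    exact this.congr_fun fun k => (hptm k)
  have hPlus : HasSum (fun k => (Real.sqrt (pois a k) + Real.sqrt (pois b k)) ^ 2)
      (2 + 2 * S) := by
    have := (hP.add hQ).add (hSsum.mul_left 2)
    norm_num at this
    exact this.congr_fun fun k => (hptp k)
  have hRHS : HasSum (fun k => (t * (Real.sqrt (pois a k) - Real.sqrt (pois b k)) ^ 2
      + (Real.sqrt (pois a k) + Real.sqrt (pois b k)) ^ 2 / t) / 2)
      ((t * (2 - 2 * S) + (2 + 2 * S) / t) / 2) :=
    ((hMinus.mul_left t).add (hPlus.div_const t)).div_const 2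
  -- pointwise bound
  have hpt : ∀ k, |pois a k - pois b k|
      ≤ (t * (Real.sqrt (pois a k) - Real.sqrt (pois b k)) ^ 2
        + (Real.sqrt (pois a k) + Real.sqrt (pois b k)) ^ 2 / t) / 2 := by
    intro k
    set x := Real.sqrt (pois a k) with hx
    set y := Real.sqrt (pois b k) with hy
    have hx0 : 0 ≤ x := Real.sqrt_nonneg _
    have hy0 : 0 ≤ y := Real.sqrt_nonneg _
    have hxx : x ^ 2 = pois a k := Real.sq_sqrt (pois_nonneg ha k)
    have hyy : y ^ 2 = pois b k := Real.sq_sqrt (pois_nonneg hb k)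
    have habs : |pois a k - pois b k| = |x - y| * (x + y) := by
      rw [← hxx, ← hyy]
      rw [show x ^ 2 - y ^ 2 = (x - y) * (x + y) by ring, abs_mul,
        abs_of_nonneg (show (0:ℝ) ≤ x + y from add_nonneg hx0 hy0)]
    rw [habs]
    have h2 : (x - y) ^ 2 = |x - y| ^ 2 := (sq_abs _).symm
    rw [h2]
    set u := |x - y| with hu
    set v := x + y with hv
    have hu0 : 0 ≤ u := abs_nonneg _
    have hid : t * u ^ 2 + v ^ 2 / t - 2 * (u * v) = (t * u - v) ^ 2 / t := by
      field_simp
      ring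
    have hge : 0 ≤ (t * u - v) ^ 2 / t := div_nonneg (sq_nonneg _) htpos.le
    linarith [hid, hge]
  have hsum : Summable (fun k => |pois a k - pois b k|) :=
    Summable.of_nonneg_of_le (fun k => abs_nonneg _) hpt hRHS.summable
  have hle := Summable.tsum_le_tsum hpt hsum hRHS.summable
  rw [hRHS.tsum_eq] at hle
  refine hle.trans ?_
  -- final arithmetic
  have hS1 : S ≤ 1 := by
    rw [hS, Real.exp_le_one_iff]
    nlinarith [sq_nonneg (Real.sqrt a - Real.sqrt b)]
  have h2S : 2 - 2 * S ≤ r ^ 2 := by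
    have hx := Real.add_one_le_exp (-(Real.sqrt a - Real.sqrt b) ^ 2 / 2)
    have : r ^ 2 = (Real.sqrt a - Real.sqrt b) ^ 2 := sq_abs _
    rw [hS]
    nlinarith [hx]
  have e1 : t * (2 - 2 * S) ≤ 2 * r := by
    have := mul_le_mul_of_nonneg_left h2S htpos.le
    have ht2 : t * r ^ 2 = 2 * r := by rw [ht]; field_simp
    linarith
  have e2 : (2 + 2 * S) / t ≤ 2 * r := by
    rw [ht, div_div_eq_mul_div]
    rw [div_le_iff₀ (by norm_num : (0:ℝ) < 2)]
    nlinarith [hS1, hrpos]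
  linarith
lemma pois_add (a c : ℝ) (k : ℕ) :
    pois (a + c) k = ∑ j ∈ Finset.range (k+1), pois a j * pois c (k - j) := by
  unfold pois
  rw [neg_add, Real.exp_add, add_pow]
  rw [Finset.mul_sum, Finset.sum_div]
  refine Finset.sum_congr rfl fun j hj => ?_
  have hjk : j ≤ k := Nat.lt_succ_iff.mp (Finset.mem_range.mp hj)
  have hfac : (Nat.choose k j : ℝ) * (Nat.factorial j : ℝ) * (Nat.factorial (k-j) : ℝ)
      = (Nat.factorial k : ℝ) := by
    exact_mod_cast congrArg (Nat.cast : ℕ → ℝ) (Nat.choose_mul_factorial_mul_factorial hjk)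
  have h1 : (Nat.factorial j : ℝ) ≠ 0 := Nat.cast_ne_zero.mpr (Nat.factorial_ne_zero j)
  have h2 : (Nat.factorial (k-j) : ℝ) ≠ 0 := Nat.cast_ne_zero.mpr (Nat.factorial_ne_zero _)
  have h3 : (Nat.factorial k : ℝ) ≠ 0 := Nat.cast_ne_zero.mpr (Nat.factorial_ne_zero k)
  field_simp
  rw [← hfac]
  ring
lemma pois_zero (c : ℝ) : pois c 0 = Real.exp (-c) := by simp [pois]

lemma tsum_abs_sub_pois_le_lin' {a c : ℝ} (ha : 0 ≤ a) (hc : 0 ≤ c) :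
    ∑' k, |pois a k - pois (a + c) k| ≤ 2 * c := by
  set e := Real.exp (-c) with he
  have he1 : e ≤ 1 := Real.exp_le_one_iff.mpr (by linarith)
  have he0 : 0 ≤ e := (Real.exp_pos _).le
  have hkey : ∀ k, pois a k - pois (a + c) k
      = pois a k * (1 - e) - (pois (a + c) k - pois a k * e) := by
    intro k; ring
  have hconv : ∀ k, ∑ j ∈ Finset.range k, pois a j * pois c (k - j)
      = pois (a + c) k - pois a k * e := by
    intro k
    have := pois_add a c k
    rw [Finset.sum_range_succ] at this
    simp only [Nat.sub_self, pois_zero] at this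
    rw [← he] at this
    linarith
  have hg : HasSum (fun k => pois a k * (1 - e) + (pois (a + c) k - pois a k * e))
      (2 * (1 - e)) := by
    have h1 : HasSum (fun k => pois a k * (1 - e)) (1 * (1 - e)) := hasSum_pois.mul_right _
    have h2 : HasSum (fun k => pois (a + c) k - pois a k * e) (1 - 1 * e) :=
      hasSum_pois.sub (hasSum_pois.mul_right e)
    have := h1.add h2
    norm_num at this
    convert this using 1
    ring
  have hpt : ∀ k, |pois a k - pois (a + c) k|
      ≤ pois a k * (1 - e) + (pois (a + c) k - pois a k * e) := by
    intro k
    have hn1 : 0 ≤ pois a k * (1 - e) := mul_nonneg (pois_nonneg ha k) (by linarith)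
    have hn2 : 0 ≤ pois (a + c) k - pois a k * e := by
      rw [← hconv k]
      exact Finset.sum_nonneg fun j _ =>
        mul_nonneg (pois_nonneg ha j) (pois_nonneg hc _)
    rw [hkey k]
    exact (abs_sub _ _).trans (by
      rw [abs_of_nonneg hn1, abs_of_nonneg hn2])
  have hsum : Summable (fun k => |pois a k - pois (a + c) k|) :=
    Summable.of_nonneg_of_le (fun k => abs_nonneg _) hpt hg.summable
  have := Summable.tsum_le_tsum hpt hsum hg.summable
  rw [hg.tsum_eq] at this
  refine this.trans ?_
  have := Real.add_one_le_exp (-c)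
  linarith

lemma tsum_abs_sub_pois_le_lin {a b : ℝ} (ha : 0 ≤ a) (hb : 0 ≤ b) :
    ∑' k, |pois a k - pois b k| ≤ 2 * |a - b| := by
  rcases le_total a b with h | h
  · have := tsum_abs_sub_pois_le_lin' ha (by linarith : (0:ℝ) ≤ b - a)
    rw [show a + (b - a) = b by ring] at this
    rw [abs_of_nonpos (by linarith : a - b ≤ 0)]
    linarith
  · have ha' : a = b + (a - b) := by ring
    rw [abs_of_nonneg (by linarith : (0:ℝ) ≤ a - b)]
    have h2 := tsum_abs_sub_pois_le_lin' hb (by linarith : (0:ℝ) ≤ a - b)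
    have heq : ∀ k, |pois b k - pois (b + (a - b)) k| = |pois a k - pois b k| := by
      intro k
      rw [show b + (a - b) = a by ring, abs_sub_comm]
    rw [tsum_congr heq] at h2
    exact h2
lemma pois_core_bound (A : Set ℕ) {a b : ℝ} (ha : 0 ≤ a) (hb : 0 ≤ b) :
    |∑' k, (A.indicator (pois a) k - A.indicator (pois b) k)|
      ≤ min |Real.sqrt a - Real.sqrt b| |a - b| := by
  classical
  set d : ℕ → ℝ := fun k => pois a k - pois b k with hd
  have hsd : Summable d := (hasSum_pois.summable).sub (hasSum_pois.summable)
  have hsad : Summable (fun k => |d k|) := hsd.abs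
  have hindd : ∀ (B : Set ℕ) k, B.indicator (pois a) k - B.indicator (pois b) k
      = B.indicator d k := by
    intro B k; by_cases h : k ∈ B <;> simp [Set.indicator, h, hd]
  have habs : ∀ (B : Set ℕ) k, |B.indicator d k| = B.indicator (fun k => |d k|) k := by
    intro B k; by_cases h : k ∈ B <;> simp [Set.indicator, h]
  -- |∑ 1_B d| ≤ ∑ 1_B |d|
  have hb1 : ∀ B : Set ℕ, |∑' k, B.indicator d k| ≤ ∑' k, B.indicator (fun k => |d k|) k := by
    intro B
    have h := norm_tsum_le_tsum_norm (f := B.indicator d) ?_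
    · simpa [Real.norm_eq_abs, habs B] using h
    · refine (hsad.indicator B).congr fun k => ?_
      rw [Real.norm_eq_abs, habs B]
  -- sum over A and Aᶜ
  have hzero : ∑' k, A.indicator d k + ∑' k, Aᶜ.indicator d k = 0 := by
    rw [← Summable.tsum_add (hsd.indicator A) (hsd.indicator Aᶜ)]
    have : ∀ k, A.indicator d k + Aᶜ.indicator d k = d k := fun k =>
      congrFun (Set.indicator_self_add_compl A d) k
    rw [tsum_congr this]
    have := hasSum_pois (a := a) |>.sub (hasSum_pois (a := b))
    simpa [hd] using this.tsum_eq
  have habssplit : ∑' k, A.indicator (fun k => |d k|) k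
      + ∑' k, Aᶜ.indicator (fun k => |d k|) k = ∑' k, |d k| := by
    rw [← Summable.tsum_add (hsad.indicator A) (hsad.indicator Aᶜ)]
    exact tsum_congr fun k => congrFun (Set.indicator_self_add_compl A _) k
  have hmin : ∑' k, |d k| ≤ 2 * min |Real.sqrt a - Real.sqrt b| |a - b| := by
    rcases le_total |Real.sqrt a - Real.sqrt b| |a - b| with h | h
    · rw [min_eq_left h]; exact tsum_abs_sub_pois_le_sqrt ha hb
    · rw [min_eq_right h]; exact tsum_abs_sub_pois_le_lin ha hb
  rw [tsum_congr (hindd A)]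
  have h1 := hb1 A
  have h2 := hb1 Aᶜ
  have heq : |∑' k, A.indicator d k| = |∑' k, Aᶜ.indicator d k| := by
    have : ∑' k, A.indicator d k = -(∑' k, Aᶜ.indicator d k) := by linarith
    rw [this, abs_neg]
  linarith
section aux
variable {Ω : Type*} [MeasurableSpace Ω] (μ : Measure Ω) [IsProbabilityMeasure μ]
variable {X : Ω → ℝ}

lemma ind_nonneg {a : ℝ} (ha : 0 ≤ a) (A : Set ℕ) (k : ℕ) :
    0 ≤ A.indicator (pois a) k :=
  Set.indicator_nonneg (fun j _ => pois_nonneg ha j) k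

lemma ind_le_pois {a : ℝ} (ha : 0 ≤ a) (A : Set ℕ) (k : ℕ) :
    A.indicator (pois a) k ≤ pois a k := by
  classical
  by_cases h : k ∈ A <;> simp [Set.indicator_apply, h, pois_nonneg ha k]

lemma meas_pois (hX : Measurable X) (k : ℕ) : Measurable (fun ω => pois (X ω) k) := by
  unfold pois
  exact ((Real.measurable_exp.comp hX.neg).mul (hX.pow_const k)).div_const _

lemma meas_ind (hX : Measurable X) (A : Set ℕ) (k : ℕ) :
    Measurable (fun ω => A.indicator (pois (X ω)) k) := by
  classical
  by_cases h : k ∈ A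
  · simpa [Set.indicator_apply, h] using meas_pois hX k
  · simpa [Set.indicator_apply, h] using (measurable_const : Measurable (fun _ : Ω => (0:ℝ)))

lemma integrable_ind (hX : Measurable X) (hXpos : ∀ ω, 0 ≤ X ω) (A : Set ℕ) (k : ℕ) :
    Integrable (fun ω => A.indicator (pois (X ω)) k) μ := by
  refine Integrable.mono' (integrable_const 1) (meas_ind hX A k).aestronglyMeasurable ?_
  filter_upwards with ω
  rw [Real.norm_eq_abs, abs_of_nonneg (ind_nonneg (hXpos ω) A k)]
  exact (ind_le_pois (hXpos ω) A k).trans (pois_le_one (hXpos ω) k)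

lemma sum_ind_le_one {a : ℝ} (ha : 0 ≤ a) (A : Set ℕ) (n : ℕ) :
    ∑ k ∈ Finset.range n, A.indicator (pois a) k ≤ 1 := by
  calc ∑ k ∈ Finset.range n, A.indicator (pois a) k
      ≤ ∑ k ∈ Finset.range n, pois a k :=
        Finset.sum_le_sum fun k _ => ind_le_pois ha A k
    _ ≤ ∑' k, pois a k := Summable.sum_le_tsum _ (fun k _ => pois_nonneg ha k) (summable_pois a)
    _ = 1 := tsum_pois a

lemma summable_integral_ind (hX : Measurable X) (hXpos : ∀ ω, 0 ≤ X ω) (A : Set ℕ) :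
    Summable (fun k => ∫ ω, A.indicator (pois (X ω)) k ∂μ) := by
  apply summable_of_sum_range_le (c := 1)
  · intro k
    exact integral_nonneg fun ω => ind_nonneg (hXpos ω) A k
  · intro n
    rw [← integral_finset_sum _ (fun k _ => integrable_ind μ hX hXpos A k)]
    calc ∫ ω, ∑ k ∈ Finset.range n, A.indicator (pois (X ω)) k ∂μ
        ≤ ∫ _, (1:ℝ) ∂μ := by
          refine integral_mono (integrable_finset_sum _ (fun k _ => integrable_ind μ hX hXpos A k))
            (integrable_const 1) (fun ω => sum_ind_le_one (hXpos ω) A n)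
      _ = 1 := by simp

lemma lintegral_ind_sum_le_one (hX : Measurable X) (hXpos : ∀ ω, 0 ≤ X ω) (A : Set ℕ) :
    ∑' k, ∫⁻ ω, ENNReal.ofReal (A.indicator (pois (X ω)) k) ∂μ ≤ 1 := by
  rw [← lintegral_tsum (fun k =>
    ((meas_ind hX A k).ennreal_ofReal).aemeasurable)]
  calc ∫⁻ ω, ∑' k, ENNReal.ofReal (A.indicator (pois (X ω)) k) ∂μ
      ≤ ∫⁻ _, 1 ∂μ := by
        refine lintegral_mono fun ω => ?_
        rw [← ENNReal.ofReal_tsum_of_nonneg (fun k => ind_nonneg (hXpos ω) A k)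
          ((summable_pois (X ω)).indicator A)]
        rw [show (1:ENNReal) = ENNReal.ofReal 1 by simp]
        apply ENNReal.ofReal_le_ofReal
        calc ∑' k, A.indicator (pois (X ω)) k
            ≤ ∑' k, pois (X ω) k := Summable.tsum_le_tsum (fun k => ind_le_pois (hXpos ω) A k)
              ((summable_pois (X ω)).indicator A) (summable_pois (X ω))
          _ = 1 := tsum_pois _
    _ = 1 := by simp

end aux

/-- Total variation bound between two mixed Poisson distributions:
for positive random variables `Λ`, `M`,
`d_TV(MixPo Λ, MixPo M) ≤ E[min(|√Λ − √M|, |Λ − M|)]`. -/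
theorem mixed_poisson_tv_bound
    {Ω : Type*} [MeasurableSpace Ω] (μ : Measure Ω) [IsProbabilityMeasure μ]
    (Λ M : Ω → ℝ) (hΛmeas : Measurable Λ) (hMmeas : Measurable M)
    (hΛpos : ∀ ω, 0 < Λ ω) (hMpos : ∀ ω, 0 < M ω)
    (hΛint : Integrable Λ μ) (hMint : Integrable M μ) :
    ∀ A : Set ℕ,
      |(∑' k : ℕ, Set.indicator A
            (fun k => ∫ ω, Real.exp (-(Λ ω)) * (Λ ω) ^ k / (Nat.factorial k : ℝ) ∂μ) k)
        - (∑' k : ℕ, Set.indicator A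
            (fun k => ∫ ω, Real.exp (-(M ω)) * (M ω) ^ k / (Nat.factorial k : ℝ) ∂μ) k)|
      ≤ ∫ ω, min |Real.sqrt (Λ ω) - Real.sqrt (M ω)| |Λ ω - M ω| ∂μ := by
  intro A
  classical
  have hΛ0 : ∀ ω, 0 ≤ Λ ω := fun ω => (hΛpos ω).le
  have hM0 : ∀ ω, 0 ≤ M ω := fun ω => (hMpos ω).le
  -- Step 1: indicator of integral = integral of indicator
  have hrw : ∀ (X : Ω → ℝ), ∀ k : ℕ,
      Set.indicator A (fun k => ∫ ω, Real.exp (-(X ω)) * (X ω) ^ k / (Nat.factorial k : ℝ) ∂μ) k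
        = ∫ ω, A.indicator (pois (X ω)) k ∂μ := by
    intro X k
    by_cases h : k ∈ A
    · simp [Set.indicator_apply, h, pois]
    · simp [Set.indicator_apply, h]
  rw [tsum_congr (hrw Λ), tsum_congr (hrw M)]
  -- Step 2: combine the two tsums
  rw [← Summable.tsum_sub (summable_integral_ind μ hΛmeas hΛ0 A) (summable_integral_ind μ hMmeas hM0 A)]
  have hsub : ∀ k : ℕ, (∫ ω, A.indicator (pois (Λ ω)) k ∂μ) - (∫ ω, A.indicator (pois (M ω)) k ∂μ)
      = ∫ ω, (A.indicator (pois (Λ ω)) k - A.indicator (pois (M ω)) k) ∂μ := fun k =>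
    (integral_sub (integrable_ind μ hΛmeas hΛ0 A k) (integrable_ind μ hMmeas hM0 A k)).symm
  rw [tsum_congr hsub]
  -- Step 3: swap tsum and integral
  have hswap : ∑' k, ∫ ω, (A.indicator (pois (Λ ω)) k - A.indicator (pois (M ω)) k) ∂μ
      = ∫ ω, ∑' k, (A.indicator (pois (Λ ω)) k - A.indicator (pois (M ω)) k) ∂μ := by
    refine (integral_tsum (fun k => ((meas_ind hΛmeas A k).sub
      (meas_ind hMmeas A k)).aestronglyMeasurable) ?_).symm
    -- finiteness
    have hb : ∀ k, (∫⁻ ω, ‖A.indicator (pois (Λ ω)) k - A.indicator (pois (M ω)) k‖₊ ∂μ)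
        ≤ ∫⁻ ω, ENNReal.ofReal (A.indicator (pois (Λ ω)) k) ∂μ
          + ∫⁻ ω, ENNReal.ofReal (A.indicator (pois (M ω)) k) ∂μ := by
      intro k
      rw [← lintegral_add_left ((meas_ind hΛmeas A k).ennreal_ofReal)]
      refine lintegral_mono fun ω => ?_
      rw [← enorm_eq_nnnorm, Real.enorm_eq_ofReal_abs, ← ENNReal.ofReal_add (ind_nonneg (hΛ0 ω) A k)
        (ind_nonneg (hM0 ω) A k)]
      apply ENNReal.ofReal_le_ofReal
      have h1 := ind_nonneg (hΛ0 ω) A k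
      have h2 := ind_nonneg (hM0 ω) A k
      rw [abs_sub_le_iff]
      constructor <;> linarith
    refine ne_top_of_le_ne_top ?_ (Summable.tsum_le_tsum hb ENNReal.summable ENNReal.summable)
    rw [ENNReal.tsum_add]
    exact ne_top_of_le_ne_top (by norm_num)
      (add_le_add (lintegral_ind_sum_le_one μ hΛmeas hΛ0 A) (lintegral_ind_sum_le_one μ hMmeas hM0 A))
  rw [hswap]
  -- Step 4: bound the integral
  calc |∫ ω, ∑' k, (A.indicator (pois (Λ ω)) k - A.indicator (pois (M ω)) k) ∂μ|
      ≤ ∫ ω, |∑' k, (A.indicator (pois (Λ ω)) k - A.indicator (pois (M ω)) k)| ∂μ := by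
        simpa [Real.norm_eq_abs] using norm_integral_le_integral_norm
          (fun ω => ∑' k, (A.indicator (pois (Λ ω)) k - A.indicator (pois (M ω)) k)) (μ := μ)
    _ ≤ ∫ ω, min |Real.sqrt (Λ ω) - Real.sqrt (M ω)| |Λ ω - M ω| ∂μ := by
        refine integral_mono_of_nonneg (Filter.Eventually.of_forall fun ω => abs_nonneg _) ?_
          (Filter.Eventually.of_forall fun ω => pois_core_bound A (hΛ0 ω) (hM0 ω))
        -- integrability of the min
        have hmeas : Measurable (fun ω => min |Real.sqrt (Λ ω) - Real.sqrt (M ω)| |Λ ω - M ω|) :=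
          (((Real.continuous_sqrt.measurable.comp hΛmeas).sub
            (Real.continuous_sqrt.measurable.comp hMmeas)).abs).min ((hΛmeas.sub hMmeas).abs)
        refine Integrable.mono' ((hΛint.sub hMint).abs) hmeas.aestronglyMeasurable ?_
        filter_upwards with ω
        rw [Real.norm_eq_abs, abs_of_nonneg (le_min (abs_nonneg _) (abs_nonneg _))]
        exact min_le_right _ _
end

section
/- Let λ ≠ μ be positive reals and let Y_t have the probability mass function p_0(t) = μ p̃(t), p_n(t) = (1 − μ p̃(t))(1 − λ p̃(t))(λ p̃(t))^{n−1} for n ≥ 1, where p̃(t) = (e^{(λ−μ)t} − 1)/(λ e^{(λ−μ)t} − μ). Then E[1/Y_t | Y_t > 0] = ((λ−μ)/(λ e^{(λ−μ)t} − λ)) · log((λ e^{(λ−μ)t} − μ)/(λ−μ)), and this is at most ((λ−μ)/(λ e^{(λ−μ)t} − λ)) · (log(λ/(λ−μ)) + (λ−μ)t). -/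
open Real

/-- Conditional expected reciprocal population size of a (supercritical) linear
birth-death process at time `t`, given survival, and the stated upper bound. -/
theorem bd_expected_reciprocal (lam mu t : ℝ)
    (hmu : 0 < mu) (hlm : mu < lam) (ht : 0 < t) :
    let pt : ℝ := (Real.exp ((lam - mu) * t) - 1) / (lam * Real.exp ((lam - mu) * t) - mu)
    let p : ℕ → ℝ := fun n =>
      if n = 0 then mu * pt else (1 - mu * pt) * (1 - lam * pt) * (lam * pt) ^ (n - 1)
    (∑' n : ℕ, p (n + 1) / ((n : ℝ) + 1)) / (1 - p 0)
        = (lam - mu) / (lam * Real.exp ((lam - mu) * t) - lam)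
            * Real.log ((lam * Real.exp ((lam - mu) * t) - mu) / (lam - mu)) ∧
    (∑' n : ℕ, p (n + 1) / ((n : ℝ) + 1)) / (1 - p 0)
        ≤ (lam - mu) / (lam * Real.exp ((lam - mu) * t) - lam)
            * (Real.log (lam / (lam - mu)) + (lam - mu) * t) := by
  intro pt p
  have hlam : 0 < lam := hmu.trans hlm
  have hE1 : 1 < Real.exp ((lam - mu) * t) := by
    have h0 : (0:ℝ) < (lam - mu) * t := mul_pos (by linarith) ht
    linarith [Real.add_one_le_exp ((lam - mu) * t)]
  set E := Real.exp ((lam - mu) * t) with hEdef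
  have hEpos : (0:ℝ) < E := Real.exp_pos _
  have hD : 0 < lam * E - mu := by nlinarith
  have hD' : lam * E - mu ≠ 0 := ne_of_gt hD
  have hlmpos : 0 < lam - mu := sub_pos.mpr hlm
  have hlmne : lam - mu ≠ 0 := ne_of_gt hlmpos
  have hpt : pt = (E - 1) / (lam * E - mu) := rfl
  have hx0 : 0 < lam * pt := by
    rw [hpt]; exact mul_pos hlam (div_pos (sub_pos.mpr hE1) hD)
  have hx1m : 1 - lam * pt = (lam - mu) / (lam * E - mu) := by
    rw [hpt]; field_simp; ring
  have hmupt : 1 - mu * pt = (lam - mu) * E / (lam * E - mu) := by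
    rw [hpt, ← mul_div_assoc, one_sub_div hD']; ring
  have hx1mpos : 0 < 1 - lam * pt := by
    rw [hx1m]; exact div_pos hlmpos hD
  have hx1 : lam * pt < 1 := by linarith
  have hc0 : 0 < 1 - mu * pt := by
    rw [hmupt]; exact div_pos (mul_pos hlmpos hEpos) hD
  have hEl : 0 < lam * E - lam := by nlinarith
  have hs : HasSum (fun n : ℕ => (lam * pt) ^ (n + 1) / ((n : ℝ) + 1))
      (-Real.log (1 - lam * pt)) := by
    have := Real.hasSum_pow_div_log_of_abs_lt_one (x := lam * pt)
      (by rw [abs_of_pos hx0]; exact hx1)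
    convert this using 2
  have hs2 := hs.mul_left ((1 - mu * pt) * (1 - lam * pt) / (lam * pt))
  have heq : ∀ n : ℕ, p (n + 1) / ((n : ℝ) + 1)
      = (1 - mu * pt) * (1 - lam * pt) / (lam * pt)
        * ((lam * pt) ^ (n + 1) / ((n : ℝ) + 1)) := by
    intro n
    have hp : p (n + 1) = (1 - mu * pt) * (1 - lam * pt) * (lam * pt) ^ n := by
      simp [p]
    have hn : (0:ℝ) < (n : ℝ) + 1 := by positivity
    rw [hp, pow_succ]
    have hxx : (lam * pt) ^ n * (lam * pt) / ((n : ℝ) + 1)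
        = (lam * pt) * ((lam * pt) ^ n / ((n : ℝ) + 1)) := by ring
    rw [hxx, ← mul_assoc (_ / _) (lam * pt), div_mul_cancel₀ _ hx0.ne']
    ring
  have key : (∑' n : ℕ, p (n + 1) / ((n : ℝ) + 1))
      = (1 - mu * pt) * (1 - lam * pt) / (lam * pt) * (-Real.log (1 - lam * pt)) := by
    rw [tsum_congr heq, hs2.tsum_eq]
  have hp0 : p 0 = mu * pt := by simp [p]
  have hquot : (∑' n : ℕ, p (n + 1) / ((n : ℝ) + 1)) / (1 - p 0)
      = (1 - lam * pt) / (lam * pt) * (-Real.log (1 - lam * pt)) := by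
    rw [key, hp0]
    field_simp
  have hcoef : (1 - lam * pt) / (lam * pt) = (lam - mu) / (lam * E - lam) := by
    have hE1' : E - 1 ≠ 0 := ne_of_gt (sub_pos.mpr hE1)
    have hstep : lam * ((E - 1) / (lam * E - mu)) = lam * (E - 1) / (lam * E - mu) := by
      ring
    rw [hx1m, hpt, hstep, div_div_div_cancel_right₀ hD']
    rw [div_eq_div_iff (by nlinarith) hEl.ne']
    ring
  have hlog : -Real.log (1 - lam * pt) = Real.log ((lam * E - mu) / (lam - mu)) := by
    rw [hx1m, ← Real.log_inv, inv_div]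
  have main : (∑' n : ℕ, p (n + 1) / ((n : ℝ) + 1)) / (1 - p 0)
      = (lam - mu) / (lam * E - lam) * Real.log ((lam * E - mu) / (lam - mu)) := by
    rw [hquot, hcoef, hlog]
  refine ⟨main, ?_⟩
  rw [main]
  have hA : 0 ≤ (lam - mu) / (lam * E - lam) := le_of_lt (div_pos hlmpos hEl)
  have hlogle : Real.log ((lam * E - mu) / (lam - mu))
      ≤ Real.log (lam / (lam - mu)) + (lam - mu) * t := by
    have h1 : Real.log ((lam * E - mu) / (lam - mu)) ≤ Real.log (lam * E / (lam - mu)) := by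
      have hle : (lam * E - mu) / (lam - mu) ≤ lam * E / (lam - mu) := by
        gcongr
        linarith
      exact Real.log_le_log (div_pos hD hlmpos) hle
    have h2 : lam * E / (lam - mu) = lam / (lam - mu) * E := by ring
    rw [h2, Real.log_mul (ne_of_gt (div_pos hlam hlmpos)) (ne_of_gt hEpos), hEdef,
      Real.log_exp] at h1
    linarith
  calc (lam - mu) / (lam * E - lam) * Real.log ((lam * E - mu) / (lam - mu))
      ≤ (lam - mu) / (lam * E - lam) * (Real.log (lam / (lam - mu)) + (lam - mu) * t) :=
        mul_le_mul_of_nonneg_left hlogle hA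
end

section
/- Let λ > μ > 0 (or μ ≥ 0) and T ≥ log(2)/(λ−μ), and let Y_T have the distribution of a supercritical linear birth-death process at time T with initial value 1. Then E[1/√Y_T | Y_T > 0] ≤ e^{−(λ−μ)T/2} · √((2(λ−μ)/λ)(log(λ/(λ−μ)) + (λ−μ)T)). -/
open Real

private lemma bd_aux_one_le (n : ℕ) : (1 : ℝ) ≤ (n : ℝ) + 1 := by
  have : (0:ℝ) ≤ n := Nat.cast_nonneg n
  linarith

/-- Core analytic estimate: Cauchy–Schwarz plus the logarithm series. -/
private lemma bd_aux (q : ℝ) (hq0 : 0 < q) (hq1 : q < 1) :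
    (∑' n : ℕ, (1 - q) * q ^ n / Real.sqrt ((n : ℝ) + 1))
      ≤ Real.sqrt ((1 - q) / q * (-Real.log (1 - q))) := by
  have h1q0 : 0 < 1 - q := by linarith
  have hterm : ∀ n : ℕ, 0 ≤ (1 - q) * q ^ n :=
    fun n => mul_nonneg h1q0.le (pow_nonneg hq0.le n)
  have hgeo : Summable fun n : ℕ => q ^ n := summable_geometric_of_lt_one hq0.le hq1
  have hsqrt1 : ∀ n : ℕ, (1 : ℝ) ≤ Real.sqrt ((n : ℝ) + 1) := by
    intro n
    have h := Real.sqrt_le_sqrt (bd_aux_one_le n)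
    rwa [Real.sqrt_one] at h
  have hle : ∀ n : ℕ, (1 - q) * q ^ n / Real.sqrt ((n : ℝ) + 1) ≤ q ^ n := by
    intro n
    calc (1 - q) * q ^ n / Real.sqrt ((n : ℝ) + 1) ≤ (1 - q) * q ^ n :=
          div_le_self (hterm n) (hsqrt1 n)
      _ ≤ 1 * q ^ n :=
          mul_le_mul_of_nonneg_right (by linarith) (pow_nonneg hq0.le n)
      _ = q ^ n := one_mul _
  have hsumS : Summable fun n : ℕ => (1 - q) * q ^ n / Real.sqrt ((n : ℝ) + 1) :=
    Summable.of_nonneg_of_le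
      (fun n => div_nonneg (hterm n) (Real.sqrt_nonneg _)) hle hgeo
  have hleB : ∀ n : ℕ, (1 - q) * q ^ n / ((n : ℝ) + 1) ≤ q ^ n := by
    intro n
    calc (1 - q) * q ^ n / ((n : ℝ) + 1) ≤ (1 - q) * q ^ n :=
          div_le_self (hterm n) (bd_aux_one_le n)
      _ ≤ 1 * q ^ n :=
          mul_le_mul_of_nonneg_right (by linarith) (pow_nonneg hq0.le n)
      _ = q ^ n := one_mul _
  have hngt : ∀ n : ℕ, (0:ℝ) < (n : ℝ) + 1 := fun n => lt_of_lt_of_le one_pos (bd_aux_one_le n)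
  have hsumB : Summable fun n : ℕ => (1 - q) * q ^ n / ((n : ℝ) + 1) :=
    Summable.of_nonneg_of_le
      (fun n => div_nonneg (hterm n) (hngt n).le) hleB hgeo
  have hA : (∑' n : ℕ, (1 - q) * q ^ n) = 1 := by
    rw [tsum_mul_left, tsum_geometric_of_lt_one hq0.le hq1]
    field_simp
  -- value of B
  have hlog : HasSum (fun n : ℕ => q ^ (n + 1) / (n + 1)) (-Real.log (1 - q)) :=
    Real.hasSum_pow_div_log_of_abs_lt_one (by rw [abs_of_pos hq0]; exact hq1)
  have hBval : (∑' n : ℕ, (1 - q) * q ^ n / ((n : ℝ) + 1))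
      = (1 - q) / q * (-Real.log (1 - q)) := by
    rw [← (hlog.mul_left ((1 - q) / q)).tsum_eq]
    apply tsum_congr
    intro n
    rw [pow_succ]
    push_cast
    field_simp
  rw [← hBval]
  -- Cauchy–Schwarz
  apply Summable.tsum_le_of_sum_le hsumS
  intro s
  have key : ∀ n : ℕ, (1 - q) * q ^ n / Real.sqrt ((n : ℝ) + 1)
      = Real.sqrt ((1 - q) * q ^ n) * Real.sqrt ((1 - q) * q ^ n / ((n : ℝ) + 1)) := by
    intro n
    rw [← Real.sqrt_mul (hterm n)]
    rw [show (1 - q) * q ^ n * ((1 - q) * q ^ n / ((n : ℝ) + 1))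
        = ((1 - q) * q ^ n) ^ 2 / ((n : ℝ) + 1) from by ring]
    rw [Real.sqrt_div (sq_nonneg _), Real.sqrt_sq (hterm n)]
  calc ∑ n ∈ s, (1 - q) * q ^ n / Real.sqrt ((n : ℝ) + 1)
      = ∑ n ∈ s, Real.sqrt ((1 - q) * q ^ n)
          * Real.sqrt ((1 - q) * q ^ n / ((n : ℝ) + 1)) :=
        Finset.sum_congr rfl fun n _ => key n
    _ ≤ Real.sqrt (∑ n ∈ s, (1 - q) * q ^ n)
          * Real.sqrt (∑ n ∈ s, (1 - q) * q ^ n / ((n : ℝ) + 1)) :=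
        Real.sum_sqrt_mul_sqrt_le s (fun n => hterm n)
          (fun n => div_nonneg (hterm n) (hngt n).le)
    _ ≤ Real.sqrt 1 * Real.sqrt (∑' n : ℕ, (1 - q) * q ^ n / ((n : ℝ) + 1)) := by
        apply mul_le_mul
        · exact Real.sqrt_le_sqrt
            ((Summable.sum_le_tsum s (fun n _ => hterm n) (hgeo.mul_left _)).trans hA.le)
        · exact Real.sqrt_le_sqrt
            (Summable.sum_le_tsum s (fun n _ => div_nonneg (hterm n) (hngt n).le) hsumB)
        · exact Real.sqrt_nonneg _
        · exact Real.sqrt_nonneg _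
    _ = Real.sqrt (∑' n : ℕ, (1 - q) * q ^ n / ((n : ℝ) + 1)) := by
        rw [Real.sqrt_one, one_mul]

/-- Bound on `E[1/√Y_T | Y_T > 0]` for a supercritical linear birth-death
process at time `T ≥ log 2 / (λ−μ)`. -/
theorem bd_expected_reciprocal_sqrt (lam mu T : ℝ)
    (hmu : 0 ≤ mu) (hlm : mu < lam) (hT : Real.log 2 / (lam - mu) ≤ T) :
    let pt : ℝ := (Real.exp ((lam - mu) * T) - 1) / (lam * Real.exp ((lam - mu) * T) - mu)
    let p : ℕ → ℝ := fun n =>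
      if n = 0 then mu * pt else (1 - mu * pt) * (1 - lam * pt) * (lam * pt) ^ (n - 1)
    (∑' n : ℕ, p (n + 1) / Real.sqrt ((n : ℝ) + 1)) / (1 - p 0)
      ≤ Real.exp (-(lam - mu) * T / 2)
          * Real.sqrt ((2 * (lam - mu) / lam)
              * (Real.log (lam / (lam - mu)) + (lam - mu) * T)) := by
  intro pt p
  have hpt : pt = (Real.exp ((lam - mu) * T) - 1)
      / (lam * Real.exp ((lam - mu) * T) - mu) := rfl
  have hp0 : p 0 = mu * pt := rfl
  have hpn : ∀ n : ℕ, p (n + 1) = (1 - mu * pt) * ((1 - lam * pt) * (lam * pt) ^ n) := by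
    intro n
    show (if n + 1 = 0 then mu * pt else
      (1 - mu * pt) * (1 - lam * pt) * (lam * pt) ^ (n + 1 - 1)) = _
    rw [if_neg (Nat.succ_ne_zero n), Nat.add_sub_cancel, mul_assoc]
  clear_value pt p
  have hr0 : 0 < lam - mu := sub_pos.2 hlm
  have hlam : 0 < lam := lt_of_le_of_lt hmu hlm
  obtain ⟨E, hEdef⟩ : ∃ x : ℝ, Real.exp ((lam - mu) * T) = x := ⟨_, rfl⟩
  rw [hEdef] at hpt
  have hrT : Real.log 2 ≤ (lam - mu) * T := by
    rw [div_le_iff₀ hr0] at hT; linarith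
  have hE2 : (2 : ℝ) ≤ E := by
    rw [← hEdef, ← Real.exp_log (by norm_num : (0:ℝ) < 2)]
    exact Real.exp_le_exp.2 hrT
  have hE1 : (1 : ℝ) < E := by linarith
  have hE1' : (0:ℝ) < E - 1 := by linarith
  have hden : 0 < lam * E - mu := by nlinarith
  have hptpos : 0 < pt := by rw [hpt]; exact div_pos (by linarith) hden
  have hq0 : 0 < lam * pt := mul_pos hlam hptpos
  have hq1 : lam * pt < 1 := by
    rw [hpt, ← mul_div_assoc, div_lt_one hden]; nlinarith
  have hm1 : 0 < 1 - mu * pt := by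
    have : mu * pt ≤ lam * pt := mul_le_mul_of_nonneg_right hlm.le hptpos.le
    linarith
  -- reduce the goal
  have hred : (∑' n : ℕ, p (n + 1) / Real.sqrt ((n : ℝ) + 1)) / (1 - p 0)
      = ∑' n : ℕ, (1 - lam * pt) * (lam * pt) ^ n / Real.sqrt ((n : ℝ) + 1) := by
    have h1 : ∀ n : ℕ, p (n + 1) / Real.sqrt ((n : ℝ) + 1)
        = (1 - mu * pt) * ((1 - lam * pt) * (lam * pt) ^ n / Real.sqrt ((n : ℝ) + 1)) := by
      intro n; rw [hpn]; ring
    rw [tsum_congr h1, tsum_mul_left, hp0, mul_comm, mul_div_assoc, div_self hm1.ne', mul_one]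
  rw [hred]
  refine (bd_aux (lam * pt) hq0 hq1).trans ?_
  -- algebraic identities
  have h1q : 1 - lam * pt = (lam - mu) / (lam * E - mu) := by
    rw [hpt]
    field_simp
    ring
  have hcoef : (1 - lam * pt) / (lam * pt) = (lam - mu) / (lam * (E - 1)) := by
    rw [h1q, hpt]
    field_simp
  have hE0 : (0:ℝ) < E := by linarith
  have hneg : -Real.log (1 - lam * pt) = Real.log ((lam * E - mu) / (lam - mu)) := by
    rw [h1q, ← Real.log_inv]
    congr 1
    rw [inv_div]
  have hlogpos : 0 ≤ Real.log ((lam * E - mu) / (lam - mu)) := by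
    apply Real.log_nonneg
    rw [le_div_iff₀ hr0]
    nlinarith
  have hBle : (1 - lam * pt) / (lam * pt) * (-Real.log (1 - lam * pt))
      ≤ Real.exp (-((lam - mu) * T))
        * ((2 * (lam - mu) / lam) * (Real.log (lam / (lam - mu)) + (lam - mu) * T)) := by
    rw [hcoef, hneg]
    have hexp : Real.exp (-((lam - mu) * T)) = 1 / E := by
      rw [Real.exp_neg, hEdef, one_div]
    rw [hexp]
    have hlogle : Real.log ((lam * E - mu) / (lam - mu))
        ≤ Real.log (lam / (lam - mu)) + (lam - mu) * T := by
      have h1 : Real.log ((lam * E - mu) / (lam - mu))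
          ≤ Real.log (lam * E / (lam - mu)) := by
        apply Real.log_le_log (div_pos hden hr0)
        exact (div_le_div_iff_of_pos_right hr0).2 (by nlinarith)
      have h2 : Real.log (lam * E / (lam - mu))
          = Real.log (lam / (lam - mu)) + (lam - mu) * T := by
        rw [show lam * E / (lam - mu) = lam / (lam - mu) * E from by ring,
          Real.log_mul (div_pos hlam hr0).ne' hE0.ne', ← hEdef, Real.log_exp]
      linarith
    have hrhs : 1 / E * (2 * (lam - mu) / lam) = 2 * (lam - mu) / (lam * E) := by
      field_simp
    have hcle : (lam - mu) / (lam * (E - 1)) ≤ 1 / E * (2 * (lam - mu) / lam) := by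
      rw [hrhs, div_le_div_iff₀ (mul_pos hlam hE1') (mul_pos hlam hE0)]
      nlinarith [mul_nonneg (mul_nonneg (by linarith : (0:ℝ) ≤ E - 2) hr0.le) hlam.le]
    calc (lam - mu) / (lam * (E - 1)) * Real.log ((lam * E - mu) / (lam - mu))
        ≤ (1 / E * (2 * (lam - mu) / lam))
            * (Real.log (lam / (lam - mu)) + (lam - mu) * T) :=
          mul_le_mul hcle hlogle hlogpos
            (mul_nonneg (one_div_nonneg.2 hE0.le) (div_nonneg (by linarith) hlam.le))
      _ = 1 / E * (2 * (lam - mu) / lam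
            * (Real.log (lam / (lam - mu)) + (lam - mu) * T)) := by ring
  calc Real.sqrt ((1 - lam * pt) / (lam * pt) * (-Real.log (1 - lam * pt)))
      ≤ Real.sqrt (Real.exp (-((lam - mu) * T))
          * ((2 * (lam - mu) / lam) * (Real.log (lam / (lam - mu)) + (lam - mu) * T))) :=
        Real.sqrt_le_sqrt hBle
    _ = Real.exp (-(lam - mu) * T / 2)
          * Real.sqrt ((2 * (lam - mu) / lam)
              * (Real.log (lam / (lam - mu)) + (lam - mu) * T)) := by
        rw [Real.sqrt_mul (Real.exp_pos _).le, ← Real.exp_half,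
          show -((lam - mu) * T) / 2 = -(lam - mu) * T / 2 from by ring]
end

section
/- For a supercritical linear birth-death process with λ > μ ≥ 0 and initial value 1, the conditional probability of eventual extinction given survival to time T equals (μ/λ) e^{−(λ−μ)T}. -/
open Real

/-- Conditional extinction probability given survival to time `T` for a
supercritical linear birth-death process:
`E[(μ/λ)^{Y_T} | Y_T > 0] = (μ/λ) e^{−(λ−μ)T}`. -/
theorem bd_conditional_extinction (lam mu T : ℝ)
    (hmu : 0 ≤ mu) (hlm : mu < lam) (hT : 0 < T) :
    let pt : ℝ := (Real.exp ((lam - mu) * T) - 1) / (lam * Real.exp ((lam - mu) * T) - mu)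
    let p : ℕ → ℝ := fun n =>
      if n = 0 then mu * pt else (1 - mu * pt) * (1 - lam * pt) * (lam * pt) ^ (n - 1)
    (∑' n : ℕ, (mu / lam) ^ (n + 1) * p (n + 1)) / (1 - p 0)
      = (mu / lam) * Real.exp (-(lam - mu) * T) := by
  intro pt p
  have hl : 0 < lam := lt_of_le_of_lt hmu hlm
  have hp0 : p 0 = mu * pt := rfl
  have hpn : ∀ n : ℕ, p (n + 1) = (1 - mu * pt) * (1 - lam * pt) * (lam * pt) ^ n :=
    fun n => rfl
  simp only [hp0, hpn]
  clear hp0 hpn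
  clear p
  have hpt : pt = (Real.exp ((lam - mu) * T) - 1) / (lam * Real.exp ((lam - mu) * T) - mu) := rfl
  clear_value pt
  set E : ℝ := Real.exp ((lam - mu) * T) with hE
  have hE1 : 1 < E := by
    rw [hE]
    have h0 : (0:ℝ) < (lam - mu) * T := by nlinarith
    calc (1:ℝ) = Real.exp 0 := by simp
    _ < Real.exp ((lam - mu) * T) := Real.exp_lt_exp.mpr h0
  have hD : 0 < lam * E - mu := by nlinarith
  have hDne : lam * E - mu ≠ 0 := ne_of_gt hD
  have hlne : lam ≠ 0 := ne_of_gt hl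
  have hEne : E ≠ 0 := by positivity
  have hlm' : lam - mu ≠ 0 := by nlinarith
  have e1 : 1 - lam * pt = (lam - mu) / (lam * E - mu) := by
    rw [hpt]; field_simp; ring
  have e2 : 1 - mu * pt = (lam - mu) * E / (lam * E - mu) := by
    rw [hpt]; rw [eq_div_iff hDne, sub_mul, mul_div_assoc', div_mul_cancel₀ _ hDne]; ring
  have hx0 : 0 ≤ mu * pt := by
    rw [hpt, ← mul_div_assoc]
    apply div_nonneg _ (le_of_lt hD)
    nlinarith
  have hx1 : mu * pt < 1 := by
    rw [hpt, ← mul_div_assoc, div_lt_one hD]; nlinarith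
  have hx1ne : 1 - mu * pt ≠ 0 := by nlinarith
  have key : ∀ n : ℕ, (mu / lam) ^ (n + 1) * ((1 - mu * pt) * (1 - lam * pt) * (lam * pt) ^ n)
      = ((mu / lam) * ((1 - mu * pt) * (1 - lam * pt))) * (mu * pt) ^ n := by
    intro n
    have h : mu * pt = (mu / lam) * (lam * pt) := by field_simp
    rw [h, mul_pow, pow_succ]; ring
  rw [tsum_congr key, tsum_mul_left, tsum_geometric_of_lt_one hx0 hx1]
  rw [neg_mul, Real.exp_neg, ← hE, e1, e2]
  rw [e2] at hx1ne
  field_simp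
end

section
/- Let λ > μ ≥ 0 and T > 0. Define F_*(t) = 1 − (e^{−λt} − e^{−(λ−μ)T} e^{−μt})/(1 − e^{−(λ−μ)T}) for t ∈ [0,T]. Then F_* is a cumulative distribution function on [0,T] (nondecreasing, F_*(0) = 0, F_*(T) = 1), and 1 − F_*(t) ≤ e^{−λt} for all t ∈ [0,T]; i.e., the distribution with CDF F_* is stochastically dominated by Exp(λ). -/
open Real

/-- `F_*` is a CDF on `[0,T]` and the corresponding distribution is
stochastically dominated by `Exp(λ)`: `1 − F_*(t) ≤ e^{−λt}`. -/
theorem age_cdf_dominated (lam mu T : ℝ)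
    (hmu : 0 ≤ mu) (hlm : mu < lam) (hT : 0 < T) :
    let F : ℝ → ℝ := fun t =>
      1 - (Real.exp (-lam * t) - Real.exp (-(lam - mu) * T) * Real.exp (-mu * t))
            / (1 - Real.exp (-(lam - mu) * T))
    MonotoneOn F (Set.Icc 0 T) ∧ F 0 = 0 ∧ F T = 1 ∧
      ∀ t ∈ Set.Icc (0:ℝ) T, 1 - F t ≤ Real.exp (-lam * t) := by
  intro F
  set C : ℝ := Real.exp (-(lam - mu) * T) with hCdef
  have hC1 : C < 1 := by
    rw [hCdef, ← Real.exp_zero]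
    apply Real.exp_lt_exp.mpr
    nlinarith
  have hD : 0 < 1 - C := by linarith
  have hlam : 0 < lam := lt_of_le_of_lt hmu hlm
  -- the numerator function
  set g : ℝ → ℝ := fun t => Real.exp (-lam * t) - C * Real.exp (-mu * t) with hgdef
  have hderiv : ∀ t : ℝ, HasDerivAt g
      (-lam * Real.exp (-lam * t) - C * (-mu * Real.exp (-mu * t))) t := by
    intro t
    have h1 : HasDerivAt (fun t => Real.exp (-lam * t)) (-lam * Real.exp (-lam * t)) t := by
      have := ((hasDerivAt_id t).const_mul (-lam)).exp
      simpa [mul_comm] using this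
    have h2 : HasDerivAt (fun t => Real.exp (-mu * t)) (-mu * Real.exp (-mu * t)) t := by
      have := ((hasDerivAt_id t).const_mul (-mu)).exp
      simpa [mul_comm] using this
    exact h1.sub (h2.const_mul C)
  have hanti : AntitoneOn g (Set.Icc 0 T) := by
    apply antitoneOn_of_deriv_nonpos (convex_Icc 0 T)
    · exact (Continuous.continuousOn (by fun_prop))
    · intro t ht
      exact (hderiv t).differentiableAt.differentiableWithinAt
    · intro t ht
      rw [interior_Icc] at ht
      rw [(hderiv t).deriv]
      have hkey : mu * C * Real.exp (-mu * t) ≤ lam * Real.exp (-lam * t) := by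
        have h1 : C ≤ Real.exp (-(lam - mu) * t) := by
          rw [hCdef]
          apply Real.exp_le_exp.mpr
          nlinarith [ht.1, ht.2]
        have h2 : Real.exp (-(lam - mu) * t) * Real.exp (-mu * t) = Real.exp (-lam * t) := by
          rw [← Real.exp_add]; ring_nf
        calc mu * C * Real.exp (-mu * t)
            ≤ lam * (Real.exp (-(lam - mu) * t) * Real.exp (-mu * t)) := by
              have hc0 : (0:ℝ) < C := Real.exp_pos _
              have hmc : mu * C ≤ lam * Real.exp (-(lam - mu) * t) :=
                mul_le_mul hlm.le h1 hc0.le hlam.le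
              have he := (Real.exp_pos (-mu * t)).le
              nlinarith
          _ = lam * Real.exp (-lam * t) := by rw [h2]
      nlinarith [Real.exp_pos (-lam * t), Real.exp_pos (-mu * t)]
  have hF : ∀ t, F t = 1 - g t / (1 - C) := fun t => rfl
  refine ⟨?_, ?_, ?_, ?_⟩
  · intro a ha b hb hab
    rw [hF, hF]
    have hgd : g b / (1 - C) ≤ g a / (1 - C) := by
      gcongr
      exact hanti ha hb hab
    linarith
  · rw [hF]
    have : g 0 = 1 - C := by simp [hgdef]
    rw [this, div_self (ne_of_gt hD)]; ring
  · rw [hF]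
    have h2 : C * Real.exp (-mu * T) = Real.exp (-lam * T) := by
      rw [hCdef, ← Real.exp_add]; ring_nf
    have : g T = 0 := by
      show Real.exp (-lam * T) - C * Real.exp (-mu * T) = 0
      linarith
    rw [this]; simp
  · intro t ht
    rw [hF]
    have he : Real.exp (-lam * t) ≤ Real.exp (-mu * t) := by
      apply Real.exp_le_exp.mpr
      nlinarith [ht.1]
    have hc0 : (0:ℝ) < C := Real.exp_pos _
    have hgoal : g t / (1 - C) ≤ Real.exp (-lam * t) := by
      rw [div_le_iff₀ hD]
      show Real.exp (-lam * t) - C * Real.exp (-mu * t) ≤ _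
      nlinarith
    linarith
end
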